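/- There exists exactly one 11-tuple (K10, K1100, K1010, K0110, L, L0, L00, L10, L100, L010, L110) of formal power series in ℚ[[t]] satisfying the system (with S denoting L0 − K10 + L100 − K1100 + L010 − K1010 + L110 − K0110): K10 = t + t·L0; K1100 = t·K10 + t·L100; K1010 = 2t·K10 + t·L010; K0110 = t·K10 + t·L110; L = 1 + 2t·L² + t·(L−1) + 2t·S; L0 = 2t·L·L0 + t·L + t·L0 + t·S; L00 = 2t·L·L00 + t·L0 + t·L00 + t·(L100 − K1100); L10 = 2t·L·L10 + t·L0 + t + t·L10 + t·(L0 − K10 + L010 − K1010 + L110 − K0110); L100 = 2t·L·L100 + t·L10 + t·L100 + t·(L100 − K1100); L010 = 2t·L·L010 + t·(L10 + L·K10) + t·L010 + t·(L010 − K1010); L110 = 2t·L·L110 + t·(L00 + L·K10) + t·L110 + t·(L110 − K0110). Moreover, the series L of this unique solution satisfies the quartic equation 8t³·L⁴ − 4t²(3t³+4t²−6t+3)·L³ + 2t(3t⁵−12t⁴−10t³+14t²−10t+3)·L² + (t−1)(11t⁵−10t⁴−6t³−3t²−t+1)·L + (t−1)(5t⁵−4t⁴+6t³−7t²+5t−1)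 = 0 in ℚ[[t]]. -/

import Mathlib

open PowerSeries

/-- The system (12) (for `k = 2`, after the 0/1 symmetry) of the paper. -/
def SysL2 (K10 K1100 K1010 K0110 L L0 L00 L10 L100 L010 L110 : PowerSeries ℚ) : Prop :=
  K10 = X + X * L0 ∧
  K1100 = X * K10 + X * L100 ∧
  K1010 = 2 * X * K10 + X * L010 ∧
  K0110 = X * K10 + X * L110 ∧
  L = 1 + 2 * X * L ^ 2 + X * (L - 1)
      + 2 * X * (L0 - K10 + L100 - K1100 + L010 - K1010 + L110 - K0110) ∧
  L0 = 2 * X * L * L0 + X * L + X * L0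
      + X * (L0 - K10 + L100 - K1100 + L010 - K1010 + L110 - K0110) ∧
  L00 = 2 * X * L * L00 + X * L0 + X * L00 + X * (L100 - K1100) ∧
  L10 = 2 * X * L * L10 + X * L0 + X + X * L10
      + X * (L0 - K10 + L010 - K1010 + L110 - K0110) ∧
  L100 = 2 * X * L * L100 + X * L10 + X * L100 + X * (L100 - K1100) ∧
  L010 = 2 * X * L * L010 + X * (L10 + L * K10) + X * L010 + X * (L010 - K1010) ∧
  L110 = 2 * X * L * L110 + X * (L00 + L * K10) + X * L110 + X * (L110 - K0110)

namespace SysL2Aux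

/-- The eleven series of a (candidate) solution, packaged in a structure. -/
structure Sol where
  k10 : PowerSeries ℚ
  k1100 : PowerSeries ℚ
  k1010 : PowerSeries ℚ
  k0110 : PowerSeries ℚ
  l : PowerSeries ℚ
  l0 : PowerSeries ℚ
  l00 : PowerSeries ℚ
  l10 : PowerSeries ℚ
  l100 : PowerSeries ℚ
  l010 : PowerSeries ℚ
  l110 : PowerSeries ℚ

/-- One application of the system, read as a fixed-point operator. -/
noncomputable def step (v : Sol) : Sol where
  k10 := X + X * v.l0
  k1100 := X * v.k10 + X * v.l100
  k1010 := 2 * X * v.k10 + X * v.l010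
  k0110 := X * v.k10 + X * v.l110
  l := 1 + 2 * X * v.l ^ 2 + X * (v.l - 1)
      + 2 * X * (v.l0 - v.k10 + v.l100 - v.k1100 + v.l010 - v.k1010 + v.l110 - v.k0110)
  l0 := 2 * X * v.l * v.l0 + X * v.l + X * v.l0
      + X * (v.l0 - v.k10 + v.l100 - v.k1100 + v.l010 - v.k1010 + v.l110 - v.k0110)
  l00 := 2 * X * v.l * v.l00 + X * v.l0 + X * v.l00 + X * (v.l100 - v.k1100)
  l10 := 2 * X * v.l * v.l10 + X * v.l0 + X + X * v.l10
      + X * (v.l0 - v.k10 + v.l010 - v.k1010 + v.l110 - v.k0110)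
  l100 := 2 * X * v.l * v.l100 + X * v.l10 + X * v.l100 + X * (v.l100 - v.k1100)
  l010 := 2 * X * v.l * v.l010 + X * (v.l10 + v.l * v.k10) + X * v.l010 + X * (v.l010 - v.k1010)
  l110 := 2 * X * v.l * v.l110 + X * (v.l00 + v.l * v.k10) + X * v.l110 + X * (v.l110 - v.k0110)

/-- `u` and `v` agree up to order `n` (componentwise). -/
def Near (n : ℕ) (u v : Sol) : Prop :=
  X ^ n ∣ u.k10 - v.k10 ∧ X ^ n ∣ u.k1100 - v.k1100 ∧ X ^ n ∣ u.k1010 - v.k1010 ∧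
  X ^ n ∣ u.k0110 - v.k0110 ∧ X ^ n ∣ u.l - v.l ∧ X ^ n ∣ u.l0 - v.l0 ∧
  X ^ n ∣ u.l00 - v.l00 ∧ X ^ n ∣ u.l10 - v.l10 ∧ X ^ n ∣ u.l100 - v.l100 ∧
  X ^ n ∣ u.l010 - v.l010 ∧ X ^ n ∣ u.l110 - v.l110

lemma near_zero (u v : Sol) : Near 0 u v := by
  unfold Near; simp

lemma near_refl (n : ℕ) (u : Sol) : Near n u u := by
  unfold Near; simp

lemma near_mono {m n : ℕ} (h : m ≤ n) {u v : Sol} (hn : Near n u v) : Near m u v := by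
  obtain ⟨a1,a2,a3,a4,a5,a6,a7,a8,a9,a10,a11⟩ := hn
  exact ⟨(pow_dvd_pow X h).trans a1, (pow_dvd_pow X h).trans a2, (pow_dvd_pow X h).trans a3,
    (pow_dvd_pow X h).trans a4, (pow_dvd_pow X h).trans a5, (pow_dvd_pow X h).trans a6,
    (pow_dvd_pow X h).trans a7, (pow_dvd_pow X h).trans a8, (pow_dvd_pow X h).trans a9,
    (pow_dvd_pow X h).trans a10, (pow_dvd_pow X h).trans a11⟩

lemma near_symm {n : ℕ} {u v : Sol} (h : Near n u v) : Near n v u := by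
  obtain ⟨a1,a2,a3,a4,a5,a6,a7,a8,a9,a10,a11⟩ := h
  exact ⟨dvd_sub_comm.mp a1, dvd_sub_comm.mp a2, dvd_sub_comm.mp a3, dvd_sub_comm.mp a4,
    dvd_sub_comm.mp a5, dvd_sub_comm.mp a6, dvd_sub_comm.mp a7, dvd_sub_comm.mp a8,
    dvd_sub_comm.mp a9, dvd_sub_comm.mp a10, dvd_sub_comm.mp a11⟩

lemma dvd_sub_trans {x a b c : PowerSeries ℚ} (h1 : x ∣ a - b) (h2 : x ∣ b - c) :
    x ∣ a - c := by
  have := dvd_add h1 h2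
  rwa [sub_add_sub_cancel] at this

lemma near_trans {n : ℕ} {u v w : Sol} (h : Near n u v) (h' : Near n v w) : Near n u w := by
  obtain ⟨a1,a2,a3,a4,a5,a6,a7,a8,a9,a10,a11⟩ := h
  obtain ⟨b1,b2,b3,b4,b5,b6,b7,b8,b9,b10,b11⟩ := h'
  exact ⟨dvd_sub_trans a1 b1, dvd_sub_trans a2 b2, dvd_sub_trans a3 b3, dvd_sub_trans a4 b4,
    dvd_sub_trans a5 b5, dvd_sub_trans a6 b6, dvd_sub_trans a7 b7, dvd_sub_trans a8 b8,
    dvd_sub_trans a9 b9, dvd_sub_trans a10 b10, dvd_sub_trans a11 b11⟩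

lemma key {n : ℕ} {a b c d : PowerSeries ℚ} (h : X ^ n ∣ c - d)
    (h2 : a - b = X * (c - d)) : X ^ (n + 1) ∣ a - b := by
  rw [h2, pow_succ, mul_comm (X ^ n) X]
  exact mul_dvd_mul_left X h

lemma dvd_sub_of_mk_eq {n : ℕ} {c d : PowerSeries ℚ}
    (h : Ideal.Quotient.mk (Ideal.span {(X : PowerSeries ℚ) ^ n}) c =
      Ideal.Quotient.mk (Ideal.span {(X : PowerSeries ℚ) ^ n}) d) : X ^ n ∣ c - d := by
  rw [Ideal.Quotient.eq, Ideal.mem_span_singleton] at h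
  exact h

lemma mk_eq_of_dvd {n : ℕ} {c d : PowerSeries ℚ} (h : X ^ n ∣ c - d) :
    Ideal.Quotient.mk (Ideal.span {(X : PowerSeries ℚ) ^ n}) c =
      Ideal.Quotient.mk (Ideal.span {(X : PowerSeries ℚ) ^ n}) d := by
  rw [Ideal.Quotient.eq, Ideal.mem_span_singleton]
  exact h

lemma near_step {n : ℕ} {u v : Sol} (h : Near n u v) : Near (n + 1) (step u) (step v) := by
  obtain ⟨a1,a2,a3,a4,a5,a6,a7,a8,a9,a10,a11⟩ := h
  have q1 := mk_eq_of_dvd a1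
  have q2 := mk_eq_of_dvd a2
  have q3 := mk_eq_of_dvd a3
  have q4 := mk_eq_of_dvd a4
  have q5 := mk_eq_of_dvd a5
  have q6 := mk_eq_of_dvd a6
  have q7 := mk_eq_of_dvd a7
  have q8 := mk_eq_of_dvd a8
  have q9 := mk_eq_of_dvd a9
  have q10 := mk_eq_of_dvd a10
  have q11 := mk_eq_of_dvd a11
  refine ⟨?_,?_,?_,?_,?_,?_,?_,?_,?_,?_,?_⟩
  · refine key (c := u.l0) (d := v.l0) (dvd_sub_of_mk_eq ?_) (by simp only [step]; ring)
    rw [q6]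
  · refine key (c := u.k10 + u.l100) (d := v.k10 + v.l100)
      (dvd_sub_of_mk_eq ?_) (by simp only [step]; ring)
    simp only [map_add, q1, q9]
  · refine key (c := 2 * u.k10 + u.l010) (d := 2 * v.k10 + v.l010)
      (dvd_sub_of_mk_eq ?_) (by simp only [step]; ring)
    simp only [map_add, map_mul, map_ofNat, q1, q10]
  · refine key (c := u.k10 + u.l110) (d := v.k10 + v.l110)
      (dvd_sub_of_mk_eq ?_) (by simp only [step]; ring)
    simp only [map_add, q1, q11]
  · refine key
      (c := 2 * u.l ^ 2 + u.l
        + 2 * (u.l0 - u.k10 + u.l100 - u.k1100 + u.l010 - u.k1010 + u.l110 - u.k0110))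
      (d := 2 * v.l ^ 2 + v.l
        + 2 * (v.l0 - v.k10 + v.l100 - v.k1100 + v.l010 - v.k1010 + v.l110 - v.k0110))
      (dvd_sub_of_mk_eq ?_) (by simp only [step]; ring)
    simp only [map_add, map_sub, map_mul, map_pow, map_ofNat, q1, q2, q3, q4, q5, q6, q9, q10, q11]
  · refine key
      (c := 2 * u.l * u.l0 + u.l + u.l0
        + (u.l0 - u.k10 + u.l100 - u.k1100 + u.l010 - u.k1010 + u.l110 - u.k0110))
      (d := 2 * v.l * v.l0 + v.l + v.l0
        + (v.l0 - v.k10 + v.l100 - v.k1100 + v.l010 - v.k1010 + v.l110 - v.k0110))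
      (dvd_sub_of_mk_eq ?_) (by simp only [step]; ring)
    simp only [map_add, map_sub, map_mul, map_ofNat, q1, q2, q3, q4, q5, q6, q9, q10, q11]
  · refine key
      (c := 2 * u.l * u.l00 + u.l0 + u.l00 + (u.l100 - u.k1100))
      (d := 2 * v.l * v.l00 + v.l0 + v.l00 + (v.l100 - v.k1100))
      (dvd_sub_of_mk_eq ?_) (by simp only [step]; ring)
    simp only [map_add, map_sub, map_mul, map_ofNat, q2, q5, q6, q7, q9]
  · refine key
      (c := 2 * u.l * u.l10 + u.l0 + 1 + u.l10
        + (u.l0 - u.k10 + u.l010 - u.k1010 + u.l110 - u.k0110))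
      (d := 2 * v.l * v.l10 + v.l0 + 1 + v.l10
        + (v.l0 - v.k10 + v.l010 - v.k1010 + v.l110 - v.k0110))
      (dvd_sub_of_mk_eq ?_) (by simp only [step]; ring)
    simp only [map_add, map_sub, map_mul, map_one, map_ofNat, q1, q3, q4, q5, q6, q8, q10, q11]
  · refine key
      (c := 2 * u.l * u.l100 + u.l10 + u.l100 + (u.l100 - u.k1100))
      (d := 2 * v.l * v.l100 + v.l10 + v.l100 + (v.l100 - v.k1100))
      (dvd_sub_of_mk_eq ?_) (by simp only [step]; ring)
    simp only [map_add, map_sub, map_mul, map_ofNat, q2, q5, q8, q9]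
  · refine key
      (c := 2 * u.l * u.l010 + (u.l10 + u.l * u.k10) + u.l010 + (u.l010 - u.k1010))
      (d := 2 * v.l * v.l010 + (v.l10 + v.l * v.k10) + v.l010 + (v.l010 - v.k1010))
      (dvd_sub_of_mk_eq ?_) (by simp only [step]; ring)
    simp only [map_add, map_sub, map_mul, map_ofNat, q1, q3, q5, q8, q10]
  · refine key
      (c := 2 * u.l * u.l110 + (u.l00 + u.l * u.k10) + u.l110 + (u.l110 - u.k0110))
      (d := 2 * v.l * v.l110 + (v.l00 + v.l * v.k10) + v.l110 + (v.l110 - v.k0110))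
      (dvd_sub_of_mk_eq ?_) (by simp only [step]; ring)
    simp only [map_add, map_sub, map_mul, map_ofNat, q1, q4, q5, q7, q11]

/-- The Picard iteration. -/
noncomputable def iter : ℕ → Sol
  | 0 => ⟨0, 0, 0, 0, 0, 0, 0, 0, 0, 0, 0⟩
  | n + 1 => step (iter n)

lemma near_iter_succ (n : ℕ) : Near n (iter (n + 1)) (iter n) := by
  induction n with
  | zero => exact near_zero _ _
  | succ n ih => exact near_step ih

lemma near_iter_ge {m n : ℕ} (h : n ≤ m) : Near n (iter m) (iter n) := by
  induction m with
  | zero =>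
    have : n = 0 := Nat.le_zero.mp h
    subst this; exact near_refl _ _
  | succ m ih =>
    rcases Nat.lt_or_ge n (m + 1) with h' | h'
    · exact near_trans (near_mono (Nat.lt_succ_iff.mp h') (near_iter_succ m))
        (ih (Nat.lt_succ_iff.mp h'))
    · have : n = m + 1 := le_antisymm h h'
      subst this; exact near_refl _ _

lemma eq_of_forall_dvd {a b : PowerSeries ℚ} (h : ∀ n, X ^ n ∣ a - b) : a = b := by
  have : a - b = 0 := by
    ext k
    rw [map_zero]
    exact (PowerSeries.X_pow_dvd_iff.mp (h (k + 1))) k (Nat.lt_succ_self k)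
  exact sub_eq_zero.mp this

/-- The limit of the Picard iteration. -/
noncomputable def limit : Sol where
  k10 := PowerSeries.mk fun n => coeff n (iter (n + 1)).k10
  k1100 := PowerSeries.mk fun n => coeff n (iter (n + 1)).k1100
  k1010 := PowerSeries.mk fun n => coeff n (iter (n + 1)).k1010
  k0110 := PowerSeries.mk fun n => coeff n (iter (n + 1)).k0110
  l := PowerSeries.mk fun n => coeff n (iter (n + 1)).l
  l0 := PowerSeries.mk fun n => coeff n (iter (n + 1)).l0
  l00 := PowerSeries.mk fun n => coeff n (iter (n + 1)).l00
  l10 := PowerSeries.mk fun n => coeff n (iter (n + 1)).l10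
  l100 := PowerSeries.mk fun n => coeff n (iter (n + 1)).l100
  l010 := PowerSeries.mk fun n => coeff n (iter (n + 1)).l010
  l110 := PowerSeries.mk fun n => coeff n (iter (n + 1)).l110

lemma limit_comp (f : Sol → PowerSeries ℚ)
    (hf : ∀ m n : ℕ, n ≤ m → X ^ n ∣ f (iter m) - f (iter n)) (n : ℕ) :
    X ^ n ∣ (PowerSeries.mk fun k => coeff k (f (iter (k + 1)))) - f (iter n) := by
  rw [PowerSeries.X_pow_dvd_iff]
  intro m hm
  rw [map_sub, coeff_mk]
  have h2 := hf n (m + 1) hm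
  have h3 := (PowerSeries.X_pow_dvd_iff.mp h2) m (Nat.lt_succ_self m)
  rw [map_sub] at h3
  linarith

lemma near_limit (n : ℕ) : Near n limit (iter n) := by
  refine ⟨?_,?_,?_,?_,?_,?_,?_,?_,?_,?_,?_⟩
  · exact limit_comp (fun s => s.k10) (fun m k h => (near_iter_ge h).1) n
  · exact limit_comp (fun s => s.k1100) (fun m k h => (near_iter_ge h).2.1) n
  · exact limit_comp (fun s => s.k1010) (fun m k h => (near_iter_ge h).2.2.1) n
  · exact limit_comp (fun s => s.k0110) (fun m k h => (near_iter_ge h).2.2.2.1) n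
  · exact limit_comp (fun s => s.l) (fun m k h => (near_iter_ge h).2.2.2.2.1) n
  · exact limit_comp (fun s => s.l0) (fun m k h => (near_iter_ge h).2.2.2.2.2.1) n
  · exact limit_comp (fun s => s.l00) (fun m k h => (near_iter_ge h).2.2.2.2.2.2.1) n
  · exact limit_comp (fun s => s.l10) (fun m k h => (near_iter_ge h).2.2.2.2.2.2.2.1) n
  · exact limit_comp (fun s => s.l100) (fun m k h => (near_iter_ge h).2.2.2.2.2.2.2.2.1) n
  · exact limit_comp (fun s => s.l010) (fun m k h => (near_iter_ge h).2.2.2.2.2.2.2.2.2.1) n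
  · exact limit_comp (fun s => s.l110) (fun m k h => (near_iter_ge h).2.2.2.2.2.2.2.2.2.2) n

lemma near_limit_step (n : ℕ) : Near n limit (step limit) := by
  have b : Near (n + 1) (step limit) (iter (n + 1)) := by
    simp only [iter]
    exact near_step (near_limit n)
  exact near_mono (Nat.le_succ n) (near_trans (near_limit (n + 1)) (near_symm b))

lemma sys_limit : SysL2 limit.k10 limit.k1100 limit.k1010 limit.k0110 limit.l limit.l0
    limit.l00 limit.l10 limit.l100 limit.l010 limit.l110 := by
  have h := near_limit_step
  refine ⟨?_,?_,?_,?_,?_,?_,?_,?_,?_,?_,?_⟩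
  · exact eq_of_forall_dvd fun n => by simpa only [step] using (h n).1
  · exact eq_of_forall_dvd fun n => by simpa only [step] using (h n).2.1
  · exact eq_of_forall_dvd fun n => by simpa only [step] using (h n).2.2.1
  · exact eq_of_forall_dvd fun n => by simpa only [step] using (h n).2.2.2.1
  · exact eq_of_forall_dvd fun n => by simpa only [step] using (h n).2.2.2.2.1
  · exact eq_of_forall_dvd fun n => by simpa only [step] using (h n).2.2.2.2.2.1
  · exact eq_of_forall_dvd fun n => by simpa only [step] using (h n).2.2.2.2.2.2.1
  · exact eq_of_forall_dvd fun n => by simpa only [step] using (h n).2.2.2.2.2.2.2.1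
  · exact eq_of_forall_dvd fun n => by simpa only [step] using (h n).2.2.2.2.2.2.2.2.1
  · exact eq_of_forall_dvd fun n => by simpa only [step] using (h n).2.2.2.2.2.2.2.2.2.1
  · exact eq_of_forall_dvd fun n => by simpa only [step] using (h n).2.2.2.2.2.2.2.2.2.2

lemma step_of_sys {u : Sol}
    (hu : SysL2 u.k10 u.k1100 u.k1010 u.k0110 u.l u.l0 u.l00 u.l10 u.l100 u.l010 u.l110) :
    ∀ n, Near n u (step u) := by
  obtain ⟨e1,e2,e3,e4,e5,e6,e7,e8,e9,e10,e11⟩ := hu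
  intro n
  refine ⟨?_,?_,?_,?_,?_,?_,?_,?_,?_,?_,?_⟩
  · simp only [step, ← e1, sub_self, dvd_zero]
  · simp only [step, ← e2, sub_self, dvd_zero]
  · simp only [step, ← e3, sub_self, dvd_zero]
  · simp only [step, ← e4, sub_self, dvd_zero]
  · simp only [step, ← e5, sub_self, dvd_zero]
  · simp only [step, ← e6, sub_self, dvd_zero]
  · simp only [step, ← e7, sub_self, dvd_zero]
  · simp only [step, ← e8, sub_self, dvd_zero]
  · simp only [step, ← e9, sub_self, dvd_zero]
  · simp only [step, ← e10, sub_self, dvd_zero]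
  · simp only [step, ← e11, sub_self, dvd_zero]

lemma near_of_sys {u v : Sol}
    (hu : SysL2 u.k10 u.k1100 u.k1010 u.k0110 u.l u.l0 u.l00 u.l10 u.l100 u.l010 u.l110)
    (hv : SysL2 v.k10 v.k1100 v.k1010 v.k0110 v.l v.l0 v.l00 v.l10 v.l100 v.l010 v.l110) :
    ∀ n, Near n u v := by
  intro n
  induction n with
  | zero => exact near_zero u v
  | succ n ih =>
    have hs := near_step ih
    exact near_trans (near_mono (le_refl (n+1)) (step_of_sys hu (n+1)))
      (near_trans hs (near_symm (step_of_sys hv (n+1))))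

lemma eq_of_sys {u v : Sol}
    (hu : SysL2 u.k10 u.k1100 u.k1010 u.k0110 u.l u.l0 u.l00 u.l10 u.l100 u.l010 u.l110)
    (hv : SysL2 v.k10 v.k1100 v.k1010 v.k0110 v.l v.l0 v.l00 v.l10 v.l100 v.l010 v.l110) :
    u.k10 = v.k10 ∧ u.k1100 = v.k1100 ∧ u.k1010 = v.k1010 ∧ u.k0110 = v.k0110 ∧
    u.l = v.l ∧ u.l0 = v.l0 ∧ u.l00 = v.l00 ∧ u.l10 = v.l10 ∧ u.l100 = v.l100 ∧
    u.l010 = v.l010 ∧ u.l110 = v.l110 := by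
  have h := near_of_sys hu hv
  exact ⟨eq_of_forall_dvd fun n => (h n).1,
    eq_of_forall_dvd fun n => (h n).2.1,
    eq_of_forall_dvd fun n => (h n).2.2.1,
    eq_of_forall_dvd fun n => (h n).2.2.2.1,
    eq_of_forall_dvd fun n => (h n).2.2.2.2.1,
    eq_of_forall_dvd fun n => (h n).2.2.2.2.2.1,
    eq_of_forall_dvd fun n => (h n).2.2.2.2.2.2.1,
    eq_of_forall_dvd fun n => (h n).2.2.2.2.2.2.2.1,
    eq_of_forall_dvd fun n => (h n).2.2.2.2.2.2.2.2.1,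
    eq_of_forall_dvd fun n => (h n).2.2.2.2.2.2.2.2.2.1,
    eq_of_forall_dvd fun n => (h n).2.2.2.2.2.2.2.2.2.2⟩

end SysL2Aux

set_option maxHeartbeats 4000000 in
lemma sysL2_quartic (K10 K1100 K1010 K0110 L L0 L00 L10 L100 L010 L110 : PowerSeries ℚ)
    (hs : SysL2 K10 K1100 K1010 K0110 L L0 L00 L10 L100 L010 L110) :
    8 * X ^ 3 * L ^ 4
        - 4 * X ^ 2 * (3 * X ^ 3 + 4 * X ^ 2 - 6 * X + 3) * L ^ 3
        + 2 * X * (3 * X ^ 5 - 12 * X ^ 4 - 10 * X ^ 3 + 14 * X ^ 2 - 10 * X + 3) * L ^ 2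
        + (X - 1) * (11 * X ^ 5 - 10 * X ^ 4 - 6 * X ^ 3 - 3 * X ^ 2 - X + 1) * L
        + (X - 1) * (5 * X ^ 5 - 4 * X ^ 4 + 6 * X ^ 3 - 7 * X ^ 2 + 5 * X - 1) = 0 := by
  obtain ⟨h1, h2, h3, h4, h5, h6, h7, h8, h9, h10, h11⟩ := hs
  have hD : (((-16 : PowerSeries ℚ) * X ^ 4 * L ^ 4 + (8 : PowerSeries ℚ) * X ^ 5 * L ^ 3 + (-40 : PowerSeries ℚ) * X ^ 4 * L ^ 3 + (32 : PowerSeries ℚ) * X ^ 3 * L ^ 3 + (12 : PowerSeries ℚ) * X ^ 5 * L ^ 2 + (-48 : PowerSeries ℚ) * X ^ 4 * L ^ 2 + (60 : PowerSeries ℚ) * X ^ 3 * L ^ 2 + (-24 : PowerSeries ℚ) * X ^ 2 * L ^ 2 + (6 : PowerSeries ℚ) * X ^ 5 * L + (-26 : PowerSeries ℚ) * X ^ 4 * L + (42 : PowerSeries ℚ) * X ^ 3 * L + (-30 : PowerSeries ℚ) * X ^ 2 * L + (8 : PowerSeries ℚ) * X * L + (1 : PowerSeries ℚ) * X ^ 5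 + (-5 : PowerSeries ℚ) * X ^ 4 + (10 : PowerSeries ℚ) * X ^ 3 + (-10 : PowerSeries ℚ) * X ^ 2 + (5 : PowerSeries ℚ) * X + (-1 : PowerSeries ℚ))) *
      (8 * X ^ 3 * L ^ 4
        - 4 * X ^ 2 * (3 * X ^ 3 + 4 * X ^ 2 - 6 * X + 3) * L ^ 3
        + 2 * X * (3 * X ^ 5 - 12 * X ^ 4 - 10 * X ^ 3 + 14 * X ^ 2 - 10 * X + 3) * L ^ 2
        + (X - 1) * (11 * X ^ 5 - 10 * X ^ 4 - 6 * X ^ 3 - 3 * X ^ 2 - X + 1) * L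
        + (X - 1) * (5 * X ^ 5 - 4 * X ^ 4 + 6 * X ^ 3 - 7 * X ^ 2 + 5 * X - 1)) = 0 := by
    linear_combination ((-384 : PowerSeries ℚ) * X ^ 8 * L ^ 6 + (-256 : PowerSeries ℚ) * X ^ 7 * L ^ 6 + (384 : PowerSeries ℚ) * X ^ 9 * L ^ 5 + (-1280 : PowerSeries ℚ) * X ^ 8 * L ^ 5 + (192 : PowerSeries ℚ) * X ^ 7 * L ^ 5 + (704 : PowerSeries ℚ) * X ^ 6 * L ^ 5 + (-96 : PowerSeries ℚ) * X ^ 10 * L ^ 4 + (1152 : PowerSeries ℚ) * X ^ 9 * L ^ 4 + (-2752 : PowerSeries ℚ) * X ^ 8 * L ^ 4 + (1760 : PowerSeries ℚ) * X ^ 7 * L ^ 4 + (736 : PowerSeries ℚ) * X ^ 6 * L ^ 4 + (-800 : PowerSeries ℚ) * X ^ 5 * L ^ 4 + (-224 : PowerSeries ℚ) * X ^ 10 * L ^ 3 + (1584 : PowerSeries ℚ) * X ^ 9 * L ^ 3 + (-3680 : PowerSeries ℚ) * X ^ 8 * L ^ 3 + (3472 : PowerSeries ℚ) * X ^ 7 *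 L ^ 3 + (-640 : PowerSeries ℚ) * X ^ 6 * L ^ 3 + (-992 : PowerSeries ℚ) * X ^ 5 * L ^ 3 + (480 : PowerSeries ℚ) * X ^ 4 * L ^ 3 + (-192 : PowerSeries ℚ) * X ^ 10 * L ^ 2 + (1184 : PowerSeries ℚ) * X ^ 9 * L ^ 2 + (-2872 : PowerSeries ℚ) * X ^ 8 * L ^ 2 + (3408 : PowerSeries ℚ) * X ^ 7 * L ^ 2 + (-1792 : PowerSeries ℚ) * X ^ 6 * L ^ 2 + (-80 : PowerSeries ℚ) * X ^ 5 * L ^ 2 + (504 : PowerSeries ℚ) * X ^ 4 * L ^ 2 + (-160 : PowerSeries ℚ) * X ^ 3 * L ^ 2 + (-72 : PowerSeries ℚ) * X ^ 10 * L + (452 : PowerSeries ℚ) * X ^ 9 * L + (-1192 : PowerSeries ℚ) * X ^ 8 * L + (1684 : PowerSeries ℚ) * X ^ 7 * L + (-1308 : PowerSeries ℚ) * X ^ 6 * L + (444 : PowerSeries ℚ) * X ^ 5 * L + (80 : PowerSeries ℚ) * X ^ 4 * L + (-116 : PowerSeries ℚ) * X ^ 3 * L + (28 : PowerSeries ℚ)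 * X ^ 2 * L + (-10 : PowerSeries ℚ) * X ^ 10 + (68 : PowerSeries ℚ) * X ^ 9 + (-200 : PowerSeries ℚ) * X ^ 8 + (330 : PowerSeries ℚ) * X ^ 7 + (-328 : PowerSeries ℚ) * X ^ 6 + (190 : PowerSeries ℚ) * X ^ 5 + (-48 : PowerSeries ℚ) * X ^ 4 + (-10 : PowerSeries ℚ) * X ^ 3 + (10 : PowerSeries ℚ) * X ^ 2 + (-2 : PowerSeries ℚ) * X) * h1 +
      ((-128 : PowerSeries ℚ) * X ^ 7 * L ^ 6 + (128 : PowerSeries ℚ) * X ^ 8 * L ^ 5 + (-512 : PowerSeries ℚ) * X ^ 7 * L ^ 5 + (384 : PowerSeries ℚ) * X ^ 6 * L ^ 5 + (-32 : PowerSeries ℚ) * X ^ 9 * L ^ 4 + (384 : PowerSeries ℚ) * X ^ 8 * L ^ 4 + (-1152 : PowerSeries ℚ) * X ^ 7 * L ^ 4 + (1280 : PowerSeries ℚ) * X ^ 6 * L ^ 4 + (-480 : PowerSeries ℚ) * X ^ 5 * L ^ 4 + (-64 : PowerSeries ℚ) * X ^ 9 * L ^ 3 + (512 : PowerSeries ℚ)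 * X ^ 8 * L ^ 3 + (-1472 : PowerSeries ℚ) * X ^ 7 * L ^ 3 + (1984 : PowerSeries ℚ) * X ^ 6 * L ^ 3 + (-1280 : PowerSeries ℚ) * X ^ 5 * L ^ 3 + (320 : PowerSeries ℚ) * X ^ 4 * L ^ 3 + (-48 : PowerSeries ℚ) * X ^ 9 * L ^ 2 + (352 : PowerSeries ℚ) * X ^ 8 * L ^ 2 + (-1048 : PowerSeries ℚ) * X ^ 7 * L ^ 2 + (1632 : PowerSeries ℚ) * X ^ 6 * L ^ 2 + (-1408 : PowerSeries ℚ) * X ^ 5 * L ^ 2 + (640 : PowerSeries ℚ) * X ^ 4 * L ^ 2 + (-120 : PowerSeries ℚ) * X ^ 3 * L ^ 2 + (-16 : PowerSeries ℚ) * X ^ 9 * L + (120 : PowerSeries ℚ) * X ^ 8 * L + (-384 : PowerSeries ℚ) * X ^ 7 * L + (680 : PowerSeries ℚ) * X ^ 6 * L + (-720 : PowerSeries ℚ) * X ^ 5 * L + (456 : PowerSeries ℚ) * X ^ 4 * L + (-160 : PowerSeries ℚ) * X ^ 3 * L + (24 : PowerSeries ℚ) * X ^ 2 * L + (-2 : PowerSeries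 ℚ) * X ^ 9 + (16 : PowerSeries ℚ) * X ^ 8 + (-56 : PowerSeries ℚ) * X ^ 7 + (112 : PowerSeries ℚ) * X ^ 6 + (-140 : PowerSeries ℚ) * X ^ 5 + (112 : PowerSeries ℚ) * X ^ 4 + (-56 : PowerSeries ℚ) * X ^ 3 + (16 : PowerSeries ℚ) * X ^ 2 + (-2 : PowerSeries ℚ) * X) * h2 +
      ((-128 : PowerSeries ℚ) * X ^ 7 * L ^ 6 + (128 : PowerSeries ℚ) * X ^ 8 * L ^ 5 + (-512 : PowerSeries ℚ) * X ^ 7 * L ^ 5 + (384 : PowerSeries ℚ) * X ^ 6 * L ^ 5 + (-32 : PowerSeries ℚ) * X ^ 9 * L ^ 4 + (416 : PowerSeries ℚ) * X ^ 8 * L ^ 4 + (-1184 : PowerSeries ℚ) * X ^ 7 * L ^ 4 + (1280 : PowerSeries ℚ) * X ^ 6 * L ^ 4 + (-480 : PowerSeries ℚ) * X ^ 5 * L ^ 4 + (-80 : PowerSeries ℚ) * X ^ 9 * L ^ 3 + (608 : PowerSeries ℚ) * X ^ 8 * L ^ 3 + (-1616 : PowerSeries ℚ) * X ^ 7 * L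 ^ 3 + (2048 : PowerSeries ℚ) * X ^ 6 * L ^ 3 + (-1280 : PowerSeries ℚ) * X ^ 5 * L ^ 3 + (320 : PowerSeries ℚ) * X ^ 4 * L ^ 3 + (-72 : PowerSeries ℚ) * X ^ 9 * L ^ 2 + (472 : PowerSeries ℚ) * X ^ 8 * L ^ 2 + (-1264 : PowerSeries ℚ) * X ^ 7 * L ^ 2 + (1800 : PowerSeries ℚ) * X ^ 6 * L ^ 2 + (-1456 : PowerSeries ℚ) * X ^ 5 * L ^ 2 + (640 : PowerSeries ℚ) * X ^ 4 * L ^ 2 + (-120 : PowerSeries ℚ) * X ^ 3 * L ^ 2 + (-28 : PowerSeries ℚ) * X ^ 9 * L + (184 : PowerSeries ℚ) * X ^ 8 * L + (-520 : PowerSeries ℚ) * X ^ 7 * L + (824 : PowerSeries ℚ) * X ^ 6 * L + (-796 : PowerSeries ℚ) * X ^ 5 * L + (472 : PowerSeries ℚ) * X ^ 4 * L + (-160 : PowerSeries ℚ) * X ^ 3 * L + (24 : PowerSeries ℚ) * X ^ 2 * L + (-4 : PowerSeries ℚ) * X ^ 9 + (28 : PowerSeries ℚ) * X ^ 8 + (-86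 : PowerSeries ℚ) * X ^ 7 + (152 : PowerSeries ℚ) * X ^ 6 + (-170 : PowerSeries ℚ) * X ^ 5 + (124 : PowerSeries ℚ) * X ^ 4 + (-58 : PowerSeries ℚ) * X ^ 3 + (16 : PowerSeries ℚ) * X ^ 2 + (-2 : PowerSeries ℚ) * X) * h3 +
      ((-128 : PowerSeries ℚ) * X ^ 7 * L ^ 6 + (128 : PowerSeries ℚ) * X ^ 8 * L ^ 5 + (-512 : PowerSeries ℚ) * X ^ 7 * L ^ 5 + (384 : PowerSeries ℚ) * X ^ 6 * L ^ 5 + (-32 : PowerSeries ℚ) * X ^ 9 * L ^ 4 + (416 : PowerSeries ℚ) * X ^ 8 * L ^ 4 + (-1184 : PowerSeries ℚ) * X ^ 7 * L ^ 4 + (1280 : PowerSeries ℚ) * X ^ 6 * L ^ 4 + (-480 : PowerSeries ℚ) * X ^ 5 * L ^ 4 + (-80 : PowerSeries ℚ) * X ^ 9 * L ^ 3 + (608 : PowerSeries ℚ) * X ^ 8 * L ^ 3 + (-1616 : PowerSeries ℚ) * X ^ 7 * L ^ 3 + (2048 : PowerSeries ℚ) * X ^ 6 * L ^ 3 + (-1280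 : PowerSeries ℚ) * X ^ 5 * L ^ 3 + (320 : PowerSeries ℚ) * X ^ 4 * L ^ 3 + (-72 : PowerSeries ℚ) * X ^ 9 * L ^ 2 + (472 : PowerSeries ℚ) * X ^ 8 * L ^ 2 + (-1264 : PowerSeries ℚ) * X ^ 7 * L ^ 2 + (1800 : PowerSeries ℚ) * X ^ 6 * L ^ 2 + (-1456 : PowerSeries ℚ) * X ^ 5 * L ^ 2 + (640 : PowerSeries ℚ) * X ^ 4 * L ^ 2 + (-120 : PowerSeries ℚ) * X ^ 3 * L ^ 2 + (-28 : PowerSeries ℚ) * X ^ 9 * L + (184 : PowerSeries ℚ) * X ^ 8 * L + (-520 : PowerSeries ℚ) * X ^ 7 * L + (824 : PowerSeries ℚ) * X ^ 6 * L + (-796 : PowerSeries ℚ) * X ^ 5 * L + (472 : PowerSeries ℚ) * X ^ 4 * L + (-160 : PowerSeries ℚ) * X ^ 3 * L + (24 : PowerSeries ℚ) * X ^ 2 * L + (-4 : PowerSeries ℚ) * X ^ 9 + (28 : PowerSeries ℚ) * X ^ 8 + (-86 : PowerSeries ℚ) * X ^ 7 + (152 : PowerSeries ℚ) * X ^ 6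 + (-170 : PowerSeries ℚ) * X ^ 5 + (124 : PowerSeries ℚ) * X ^ 4 + (-58 : PowerSeries ℚ) * X ^ 3 + (16 : PowerSeries ℚ) * X ^ 2 + (-2 : PowerSeries ℚ) * X) * h4 +
      ((64 : PowerSeries ℚ) * X ^ 6 * L ^ 6 + (-96 : PowerSeries ℚ) * X ^ 8 * L ^ 5 + (-160 : PowerSeries ℚ) * X ^ 7 * L ^ 5 + (320 : PowerSeries ℚ) * X ^ 6 * L ^ 5 + (-192 : PowerSeries ℚ) * X ^ 5 * L ^ 5 + (96 : PowerSeries ℚ) * X ^ 9 * L ^ 4 + (-224 : PowerSeries ℚ) * X ^ 8 * L ^ 4 + (-336 : PowerSeries ℚ) * X ^ 7 * L ^ 4 + (1024 : PowerSeries ℚ) * X ^ 6 * L ^ 4 + (-800 : PowerSeries ℚ) * X ^ 5 * L ^ 4 + (240 : PowerSeries ℚ) * X ^ 4 * L ^ 4 + (-24 : PowerSeries ℚ) * X ^ 10 * L ^ 3 + (232 : PowerSeries ℚ) * X ^ 9 * L ^ 3 + (-376 : PowerSeries ℚ) * X ^ 8 * L ^ 3 + (-376 : PowerSeries ℚ)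 * X ^ 7 * L ^ 3 + (1552 : PowerSeries ℚ) * X ^ 6 * L ^ 3 + (-1648 : PowerSeries ℚ) * X ^ 5 * L ^ 3 + (800 : PowerSeries ℚ) * X ^ 4 * L ^ 3 + (-160 : PowerSeries ℚ) * X ^ 3 * L ^ 3 + (-44 : PowerSeries ℚ) * X ^ 10 * L ^ 2 + (252 : PowerSeries ℚ) * X ^ 9 * L ^ 2 + (-388 : PowerSeries ℚ) * X ^ 8 * L ^ 2 + (-196 : PowerSeries ℚ) * X ^ 7 * L ^ 2 + (1284 : PowerSeries ℚ) * X ^ 6 * L ^ 2 + (-1704 : PowerSeries ℚ) * X ^ 5 * L ^ 2 + (1136 : PowerSeries ℚ) * X ^ 4 * L ^ 2 + (-400 : PowerSeries ℚ) * X ^ 3 * L ^ 2 + (60 : PowerSeries ℚ) * X ^ 2 * L ^ 2 + (-26 : PowerSeries ℚ) * X ^ 10 * L + (130 : PowerSeries ℚ) * X ^ 9 * L + (-202 : PowerSeries ℚ) * X ^ 8 * L + (-42 : PowerSeries ℚ) * X ^ 7 * L + (566 : PowerSeries ℚ) * X ^ 6 * L + (-890 : PowerSeries ℚ) * X ^ 5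 * L + (738 : PowerSeries ℚ) * X ^ 4 * L + (-362 : PowerSeries ℚ) * X ^ 3 * L + (100 : PowerSeries ℚ) * X ^ 2 * L + (-12 : PowerSeries ℚ) * X * L + (-5 : PowerSeries ℚ) * X ^ 10 + (23 : PowerSeries ℚ) * X ^ 9 + (-34 : PowerSeries ℚ) * X ^ 8 + (-11 : PowerSeries ℚ) * X ^ 7 + (113 : PowerSeries ℚ) * X ^ 6 + (-193 : PowerSeries ℚ) * X ^ 5 + (185 : PowerSeries ℚ) * X ^ 4 + (-113 : PowerSeries ℚ) * X ^ 3 + (44 : PowerSeries ℚ) * X ^ 2 + (-10 : PowerSeries ℚ) * X + (1 : PowerSeries ℚ)) * h5 +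
      ((192 : PowerSeries ℚ) * X ^ 8 * L ^ 5 + (128 : PowerSeries ℚ) * X ^ 7 * L ^ 5 + (-64 : PowerSeries ℚ) * X ^ 6 * L ^ 5 + (-192 : PowerSeries ℚ) * X ^ 9 * L ^ 4 + (544 : PowerSeries ℚ) * X ^ 8 * L ^ 4 + (32 : PowerSeries ℚ) * X ^ 7 * L ^ 4 + (-544 : PowerSeries ℚ) * X ^ 6 * L ^ 4 + (160 : PowerSeries ℚ) * X ^ 5 * L ^ 4 + (48 : PowerSeries ℚ) * X ^ 10 * L ^ 3 + (-480 : PowerSeries ℚ) * X ^ 9 * L ^ 3 + (960 : PowerSeries ℚ) * X ^ 8 * L ^ 3 + (-224 : PowerSeries ℚ) * X ^ 7 * L ^ 3 + (-912 : PowerSeries ℚ) * X ^ 6 * L ^ 3 + (768 : PowerSeries ℚ) * X ^ 5 * L ^ 3 + (-160 : PowerSeries ℚ) * X ^ 4 * L ^ 3 + (88 : PowerSeries ℚ) * X ^ 10 * L ^ 2 + (-520 : PowerSeries ℚ) * X ^ 9 * L ^ 2 + (936 : PowerSeries ℚ) * X ^ 8 * L ^ 2 + (-336 : PowerSeries ℚ)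 * X ^ 7 * L ^ 2 + (-832 : PowerSeries ℚ) * X ^ 6 * L ^ 2 + (1080 : PowerSeries ℚ) * X ^ 5 * L ^ 2 + (-496 : PowerSeries ℚ) * X ^ 4 * L ^ 2 + (80 : PowerSeries ℚ) * X ^ 3 * L ^ 2 + (52 : PowerSeries ℚ) * X ^ 10 * L + (-260 : PowerSeries ℚ) * X ^ 9 * L + (436 : PowerSeries ℚ) * X ^ 8 * L + (-140 : PowerSeries ℚ) * X ^ 7 * L + (-476 : PowerSeries ℚ) * X ^ 6 * L + (728 : PowerSeries ℚ) * X ^ 5 * L + (-472 : PowerSeries ℚ) * X ^ 4 * L + (152 : PowerSeries ℚ) * X ^ 3 * L + (-20 : PowerSeries ℚ) * X ^ 2 * L + (10 : PowerSeries ℚ) * X ^ 10 + (-44 : PowerSeries ℚ) * X ^ 9 + (62 : PowerSeries ℚ) * X ^ 8 + (12 : PowerSeries ℚ) * X ^ 7 + (-148 : PowerSeries ℚ) * X ^ 6 + (214 : PowerSeries ℚ) * X ^ 5 + (-162 : PowerSeries ℚ) * X ^ 4 + (72 : PowerSeries ℚ) * X ^ 3 + (-18 : PowerSeries ℚ) *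 X ^ 2 + (2 : PowerSeries ℚ) * X) * h6 +
      ((-32 : PowerSeries ℚ) * X ^ 7 * L ^ 4 + (32 : PowerSeries ℚ) * X ^ 6 * L ^ 4 + (32 : PowerSeries ℚ) * X ^ 8 * L ^ 3 + (-128 : PowerSeries ℚ) * X ^ 7 * L ^ 3 + (160 : PowerSeries ℚ) * X ^ 6 * L ^ 3 + (-64 : PowerSeries ℚ) * X ^ 5 * L ^ 3 + (-8 : PowerSeries ℚ) * X ^ 9 * L ^ 2 + (80 : PowerSeries ℚ) * X ^ 8 * L ^ 2 + (-232 : PowerSeries ℚ) * X ^ 7 * L ^ 2 + (304 : PowerSeries ℚ) * X ^ 6 * L ^ 2 + (-192 : PowerSeries ℚ) * X ^ 5 * L ^ 2 + (48 : PowerSeries ℚ) * X ^ 4 * L ^ 2 + (-12 : PowerSeries ℚ) * X ^ 9 * L + (76 : PowerSeries ℚ) * X ^ 8 * L + (-196 : PowerSeries ℚ) * X ^ 7 * L + (268 : PowerSeries ℚ) * X ^ 6 * L + (-208 : PowerSeries ℚ) * X ^ 5 * L + (88 : PowerSeries ℚ) * X ^ 4 * L + (-16 : PowerSeries ℚ)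 * X ^ 3 * L + (-4 : PowerSeries ℚ) * X ^ 9 + (24 : PowerSeries ℚ) * X ^ 8 + (-62 : PowerSeries ℚ) * X ^ 7 + (90 : PowerSeries ℚ) * X ^ 6 + (-80 : PowerSeries ℚ) * X ^ 5 + (44 : PowerSeries ℚ) * X ^ 4 + (-14 : PowerSeries ℚ) * X ^ 3 + (2 : PowerSeries ℚ) * X ^ 2) * h7 +
      ((-64 : PowerSeries ℚ) * X ^ 7 * L ^ 4 + (64 : PowerSeries ℚ) * X ^ 6 * L ^ 4 + (64 : PowerSeries ℚ) * X ^ 8 * L ^ 3 + (-256 : PowerSeries ℚ) * X ^ 7 * L ^ 3 + (320 : PowerSeries ℚ) * X ^ 6 * L ^ 3 + (-128 : PowerSeries ℚ) * X ^ 5 * L ^ 3 + (-16 : PowerSeries ℚ) * X ^ 9 * L ^ 2 + (152 : PowerSeries ℚ) * X ^ 8 * L ^ 2 + (-448 : PowerSeries ℚ) * X ^ 7 * L ^ 2 + (600 : PowerSeries ℚ) * X ^ 6 * L ^ 2 + (-384 : PowerSeries ℚ) * X ^ 5 * L ^ 2 + (96 : PowerSeries ℚ) * X ^ 4 * L ^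 2 + (-20 : PowerSeries ℚ) * X ^ 9 * L + (132 : PowerSeries ℚ) * X ^ 8 * L + (-356 : PowerSeries ℚ) * X ^ 7 * L + (508 : PowerSeries ℚ) * X ^ 6 * L + (-408 : PowerSeries ℚ) * X ^ 5 * L + (176 : PowerSeries ℚ) * X ^ 4 * L + (-32 : PowerSeries ℚ) * X ^ 3 * L + (-6 : PowerSeries ℚ) * X ^ 9 + (38 : PowerSeries ℚ) * X ^ 8 + (-104 : PowerSeries ℚ) * X ^ 7 + (160 : PowerSeries ℚ) * X ^ 6 + (-150 : PowerSeries ℚ) * X ^ 5 + (86 : PowerSeries ℚ) * X ^ 4 + (-28 : PowerSeries ℚ) * X ^ 3 + (4 : PowerSeries ℚ) * X ^ 2) * h8 +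
      ((64 : PowerSeries ℚ) * X ^ 7 * L ^ 5 + (-64 : PowerSeries ℚ) * X ^ 6 * L ^ 5 + (-64 : PowerSeries ℚ) * X ^ 8 * L ^ 4 + (288 : PowerSeries ℚ) * X ^ 7 * L ^ 4 + (-384 : PowerSeries ℚ) * X ^ 6 * L ^ 4 + (160 : PowerSeries ℚ) * X ^ 5 * L ^ 4 + (16 : PowerSeries ℚ) * X ^ 9 * L ^ 3 + (-176 : PowerSeries ℚ) * X ^ 8 * L ^ 3 + (592 : PowerSeries ℚ) * X ^ 7 * L ^ 3 + (-880 : PowerSeries ℚ) * X ^ 6 * L ^ 3 + (608 : PowerSeries ℚ) * X ^ 5 * L ^ 3 + (-160 : PowerSeries ℚ) * X ^ 4 * L ^ 3 + (24 : PowerSeries ℚ) * X ^ 9 * L ^ 2 + (-192 : PowerSeries ℚ) * X ^ 8 * L ^ 2 + (608 : PowerSeries ℚ) * X ^ 7 * L ^ 2 + (-992 : PowerSeries ℚ) * X ^ 6 * L ^ 2 + (888 : PowerSeries ℚ) * X ^ 5 * L ^ 2 + (-416 : PowerSeries ℚ) * X ^ 4 * L ^ 2 + (80 : PowerSeries ℚ)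 * X ^ 3 * L ^ 2 + (12 : PowerSeries ℚ) * X ^ 9 * L + (-92 : PowerSeries ℚ) * X ^ 8 * L + (300 : PowerSeries ℚ) * X ^ 7 * L + (-540 : PowerSeries ℚ) * X ^ 6 * L + (580 : PowerSeries ℚ) * X ^ 5 * L + (-372 : PowerSeries ℚ) * X ^ 4 * L + (132 : PowerSeries ℚ) * X ^ 3 * L + (-20 : PowerSeries ℚ) * X ^ 2 * L + (2 : PowerSeries ℚ) * X ^ 9 + (-16 : PowerSeries ℚ) * X ^ 8 + (56 : PowerSeries ℚ) * X ^ 7 + (-112 : PowerSeries ℚ) * X ^ 6 + (140 : PowerSeries ℚ) * X ^ 5 + (-112 : PowerSeries ℚ) * X ^ 4 + (56 : PowerSeries ℚ) * X ^ 3 + (-16 : PowerSeries ℚ) * X ^ 2 + (2 : PowerSeries ℚ) * X) * h9 +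
      ((64 : PowerSeries ℚ) * X ^ 7 * L ^ 5 + (-64 : PowerSeries ℚ) * X ^ 6 * L ^ 5 + (-64 : PowerSeries ℚ) * X ^ 8 * L ^ 4 + (288 : PowerSeries ℚ) * X ^ 7 * L ^ 4 + (-384 : PowerSeries ℚ) * X ^ 6 * L ^ 4 + (160 : PowerSeries ℚ) * X ^ 5 * L ^ 4 + (16 : PowerSeries ℚ) * X ^ 9 * L ^ 3 + (-192 : PowerSeries ℚ) * X ^ 8 * L ^ 3 + (624 : PowerSeries ℚ) * X ^ 7 * L ^ 3 + (-896 : PowerSeries ℚ) * X ^ 6 * L ^ 3 + (608 : PowerSeries ℚ) * X ^ 5 * L ^ 3 + (-160 : PowerSeries ℚ) * X ^ 4 * L ^ 3 + (32 : PowerSeries ℚ) * X ^ 9 * L ^ 2 + (-240 : PowerSeries ℚ) * X ^ 8 * L ^ 2 + (704 : PowerSeries ℚ) * X ^ 7 * L ^ 2 + (-1072 : PowerSeries ℚ) * X ^ 6 * L ^ 2 + (912 : PowerSeries ℚ) * X ^ 5 * L ^ 2 + (-416 : PowerSeries ℚ) * X ^ 4 * L ^ 2 + (80 : PowerSeries ℚ)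 * X ^ 3 * L ^ 2 + (20 : PowerSeries ℚ) * X ^ 9 * L + (-136 : PowerSeries ℚ) * X ^ 8 * L + (396 : PowerSeries ℚ) * X ^ 7 * L + (-644 : PowerSeries ℚ) * X ^ 6 * L + (636 : PowerSeries ℚ) * X ^ 5 * L + (-384 : PowerSeries ℚ) * X ^ 4 * L + (132 : PowerSeries ℚ) * X ^ 3 * L + (-20 : PowerSeries ℚ) * X ^ 2 * L + (4 : PowerSeries ℚ) * X ^ 9 + (-28 : PowerSeries ℚ) * X ^ 8 + (86 : PowerSeries ℚ) * X ^ 7 + (-152 : PowerSeries ℚ) * X ^ 6 + (170 : PowerSeries ℚ) * X ^ 5 + (-124 : PowerSeries ℚ) * X ^ 4 + (58 : PowerSeries ℚ) * X ^ 3 + (-16 : PowerSeries ℚ) * X ^ 2 + (2 : PowerSeries ℚ) * X) * h10 +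
      ((64 : PowerSeries ℚ) * X ^ 7 * L ^ 5 + (-64 : PowerSeries ℚ) * X ^ 6 * L ^ 5 + (-64 : PowerSeries ℚ) * X ^ 8 * L ^ 4 + (288 : PowerSeries ℚ) * X ^ 7 * L ^ 4 + (-384 : PowerSeries ℚ) * X ^ 6 * L ^ 4 + (160 : PowerSeries ℚ) * X ^ 5 * L ^ 4 + (16 : PowerSeries ℚ) * X ^ 9 * L ^ 3 + (-192 : PowerSeries ℚ) * X ^ 8 * L ^ 3 + (624 : PowerSeries ℚ) * X ^ 7 * L ^ 3 + (-896 : PowerSeries ℚ) * X ^ 6 * L ^ 3 + (608 : PowerSeries ℚ) * X ^ 5 * L ^ 3 + (-160 : PowerSeries ℚ) * X ^ 4 * L ^ 3 + (32 : PowerSeries ℚ) * X ^ 9 * L ^ 2 + (-240 : PowerSeries ℚ) * X ^ 8 * L ^ 2 + (704 : PowerSeries ℚ) * X ^ 7 * L ^ 2 + (-1072 : PowerSeries ℚ) * X ^ 6 * L ^ 2 + (912 : PowerSeries ℚ) * X ^ 5 * L ^ 2 + (-416 : PowerSeries ℚ) * X ^ 4 * L ^ 2 + (80 : PowerSeries ℚ)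 * X ^ 3 * L ^ 2 + (20 : PowerSeries ℚ) * X ^ 9 * L + (-136 : PowerSeries ℚ) * X ^ 8 * L + (396 : PowerSeries ℚ) * X ^ 7 * L + (-644 : PowerSeries ℚ) * X ^ 6 * L + (636 : PowerSeries ℚ) * X ^ 5 * L + (-384 : PowerSeries ℚ) * X ^ 4 * L + (132 : PowerSeries ℚ) * X ^ 3 * L + (-20 : PowerSeries ℚ) * X ^ 2 * L + (4 : PowerSeries ℚ) * X ^ 9 + (-28 : PowerSeries ℚ) * X ^ 8 + (86 : PowerSeries ℚ) * X ^ 7 + (-152 : PowerSeries ℚ) * X ^ 6 + (170 : PowerSeries ℚ) * X ^ 5 + (-124 : PowerSeries ℚ) * X ^ 4 + (58 : PowerSeries ℚ) * X ^ 3 + (-16 : PowerSeries ℚ) * X ^ 2 + (2 : PowerSeries ℚ) * X) * h11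
  rcases mul_eq_zero.mp hD with h | h
  · exfalso
    have hne : (((-16 : PowerSeries ℚ) * X ^ 4 * L ^ 4 + (8 : PowerSeries ℚ) * X ^ 5 * L ^ 3 + (-40 : PowerSeries ℚ) * X ^ 4 * L ^ 3 + (32 : PowerSeries ℚ) * X ^ 3 * L ^ 3 + (12 : PowerSeries ℚ) * X ^ 5 * L ^ 2 + (-48 : PowerSeries ℚ) * X ^ 4 * L ^ 2 + (60 : PowerSeries ℚ) * X ^ 3 * L ^ 2 + (-24 : PowerSeries ℚ) * X ^ 2 * L ^ 2 + (6 : PowerSeries ℚ) * X ^ 5 * L + (-26 : PowerSeries ℚ) * X ^ 4 * L + (42 : PowerSeries ℚ) * X ^ 3 * L + (-30 : PowerSeries ℚ) * X ^ 2 * L + (8 : PowerSeries ℚ) * X * L + (1 : PowerSeries ℚ) * X ^ 5 + (-5 : PowerSeries ℚ) * X ^ 4 + (10 : PowerSeries ℚ) * X ^ 3 + (-10 : PowerSeries ℚ) * X ^ 2 + (5 : PowerSeries ℚ) * X + (-1 : PowerSeries ℚ))) = -1 + X * (((-16 : PowerSeries ℚ) * X ^ 3 * L ^ 4 + (8 :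 PowerSeries ℚ) * X ^ 4 * L ^ 3 + (-40 : PowerSeries ℚ) * X ^ 3 * L ^ 3 + (32 : PowerSeries ℚ) * X ^ 2 * L ^ 3 + (12 : PowerSeries ℚ) * X ^ 4 * L ^ 2 + (-48 : PowerSeries ℚ) * X ^ 3 * L ^ 2 + (60 : PowerSeries ℚ) * X ^ 2 * L ^ 2 + (-24 : PowerSeries ℚ) * X * L ^ 2 + (6 : PowerSeries ℚ) * X ^ 4 * L + (-26 : PowerSeries ℚ) * X ^ 3 * L + (42 : PowerSeries ℚ) * X ^ 2 * L + (-30 : PowerSeries ℚ) * X * L + (8 : PowerSeries ℚ) * L + (1 : PowerSeries ℚ) * X ^ 4 + (-5 : PowerSeries ℚ) * X ^ 3 + (10 : PowerSeries ℚ) * X ^ 2 + (-10 : PowerSeries ℚ) * X + (5 : PowerSeries ℚ))) := by ring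
    have hc := congrArg (constantCoeff) h
    rw [hne] at hc
    simp at hc
  · exact h

/-- There is exactly one 11-tuple of power series in `ℚ[[t]]` satisfying the
system `SysL2`, and the series `L` of this solution satisfies the quartic
equation (13) of the paper (the algebraic equation for the generating
function of `𝓛⁽²⁾`). -/
theorem sysL2_unique_and_quartic :
    (∃! v : PowerSeries ℚ × PowerSeries ℚ × PowerSeries ℚ × PowerSeries ℚ ×
        PowerSeries ℚ × PowerSeries ℚ × PowerSeries ℚ × PowerSeries ℚ ×
        PowerSeries ℚ × PowerSeries ℚ × PowerSeries ℚ,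
      SysL2 v.1 v.2.1 v.2.2.1 v.2.2.2.1 v.2.2.2.2.1 v.2.2.2.2.2.1 v.2.2.2.2.2.2.1
        v.2.2.2.2.2.2.2.1 v.2.2.2.2.2.2.2.2.1 v.2.2.2.2.2.2.2.2.2.1
        v.2.2.2.2.2.2.2.2.2.2) ∧
    (∀ K10 K1100 K1010 K0110 L L0 L00 L10 L100 L010 L110 : PowerSeries ℚ,
      SysL2 K10 K1100 K1010 K0110 L L0 L00 L10 L100 L010 L110 →
      8 * X ^ 3 * L ^ 4
        - 4 * X ^ 2 * (3 * X ^ 3 + 4 * X ^ 2 - 6 * X + 3) * L ^ 3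
        + 2 * X * (3 * X ^ 5 - 12 * X ^ 4 - 10 * X ^ 3 + 14 * X ^ 2 - 10 * X + 3) * L ^ 2
        + (X - 1) * (11 * X ^ 5 - 10 * X ^ 4 - 6 * X ^ 3 - 3 * X ^ 2 - X + 1) * L
        + (X - 1) * (5 * X ^ 5 - 4 * X ^ 4 + 6 * X ^ 3 - 7 * X ^ 2 + 5 * X - 1) = 0) := by
  constructor
  · refine ⟨(SysL2Aux.limit.k10, SysL2Aux.limit.k1100, SysL2Aux.limit.k1010,
      SysL2Aux.limit.k0110, SysL2Aux.limit.l, SysL2Aux.limit.l0, SysL2Aux.limit.l00,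
      SysL2Aux.limit.l10, SysL2Aux.limit.l100, SysL2Aux.limit.l010, SysL2Aux.limit.l110),
      SysL2Aux.sys_limit, ?_⟩
    rintro ⟨a, b, c, d, e, f, g, h, i, j, k⟩ hy
    have he := SysL2Aux.eq_of_sys (u := SysL2Aux.Sol.mk a b c d e f g h i j k)
      (v := SysL2Aux.limit) hy SysL2Aux.sys_limit
    obtain ⟨w1, w2, w3, w4, w5, w6, w7, w8, w9, w10, w11⟩ := he
    simp only [Prod.mk.injEq]
    exact ⟨w1, w2, w3, w4, w5, w6, w7, w8, w9, w10, w11⟩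
  · intro K10 K1100 K1010 K0110 L L0 L00 L10 L100 L010 L110 hs
    exact sysL2_quartic K10 K1100 K1010 K0110 L L0 L00 L10 L100 L010 L110 hs
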